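/- Let a(w,v) = Σ_κ [ (∇w,∇v)_κ − ½(∇w,⟦v⟧)_{∂κ} − (θ/2)(⟦w⟧,∇v)_{∂κ} + (γ_κ/2)(⟦w⟧,⟦v⟧)_{∂κ} ] be the interior penalty DG bilinear form with penalty γ_κ > 0 satisfying γ_κ ≥ ½(1+θ)² d_κ², where d_κ = sup_{v_N ∈ V_N(κ)} ‖∇v_N·n_κ‖_{∂κ}/‖v_N‖_⋆ is the local inverse trace constant. Then a is coercive on V_N: for all v_N ∈ V_N, ½ |||v_N|||² ≤ a(v_N, v_N), where |||v|||² = Σ_κ [ ‖∇v‖²_κ + (γ_κ/2)‖⟦v⟧‖²_{∂κ} ]. -/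

import Mathlib

open RealInnerProductSpace

/-- coercivity of the interior penalty DG form.
Abstract model of the broken space: `H` is the broken Sobolev space, and for each element
`κ : ι`, `G κ` models `L²(κ)^d` and `B κ` models `L²(∂κ)`; `grad κ v = ∇v|_κ`,
`nflx κ v = ∇v·n_κ|_{∂κ}`, `jmp κ v = ⟦v⟧·n_κ|_{∂κ}`, and `m κ` the mean functional so that
`‖v‖_⋆² = (m κ v)² + ‖grad κ v‖²`.  `V_N` is the broken approximation space, containing the
constants (witnesses `e κ`), `d_κ` is the local inverse trace constant (so that
`‖∇v_N·n_κ‖_{∂κ} ≤ d_κ ‖v_N‖_⋆` on `V_N`), and the penalty satisfies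
`γ_κ ≥ ½(1+θ)² d_κ²`.  `A` is the interior penalty bilinear form
`a(w,v) = ∑_κ [(∇w,∇v)_κ − ½(∇w,⟦v⟧)_{∂κ} − (θ/2)(⟦w⟧,∇v)_{∂κ} + (γ_κ/2)(⟦w⟧,⟦v⟧)_{∂κ}]`.
Conclusion: `½ |||v_N|||² ≤ a(v_N, v_N)` with
`|||v|||² = ∑_κ [‖∇v‖²_κ + (γ_κ/2)‖⟦v⟧‖²_{∂κ}]`. -/
theorem stmt_7 {ι H : Type*} [Fintype ι] [AddCommGroup H] [Module ℝ H]
    (G B : ι → Type*) [∀ κ, NormedAddCommGroup (G κ)] [∀ κ, InnerProductSpace ℝ (G κ)]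
    [∀ κ, NormedAddCommGroup (B κ)] [∀ κ, InnerProductSpace ℝ (B κ)]
    (grad : ∀ κ, H →ₗ[ℝ] G κ) (nflx jmp : ∀ κ, H →ₗ[ℝ] B κ) (m : ∀ κ, H →ₗ[ℝ] ℝ)
    (VN : Submodule ℝ H) (hVN : FiniteDimensional ℝ VN)
    (θ : ℝ) (γ dk : ι → ℝ) (hγpos : ∀ κ, 0 < γ κ)
    (e : ι → H)
    (he : ∀ κ, e κ ∈ VN ∧ grad κ (e κ) = 0 ∧ nflx κ (e κ) = 0 ∧ m κ (e κ) ≠ 0)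
    (hd : ∀ κ, ∀ v ∈ VN, ‖nflx κ v‖ ≤ dk κ * Real.sqrt ((m κ v)^2 + ‖grad κ v‖^2))
    (hγ : ∀ κ, (1/2) * (1+θ)^2 * (dk κ)^2 ≤ γ κ)
    (A : H → H → ℝ)
    (hA : ∀ w v, A w v = ∑ κ : ι, (⟪grad κ w, grad κ v⟫
        - (1/2) * ⟪nflx κ w, jmp κ v⟫
        - (θ/2) * ⟪nflx κ v, jmp κ w⟫
        + (γ κ / 2) * ⟪jmp κ w, jmp κ v⟫))
    (v : H) (hv : v ∈ VN) :
    (1/2) * (∑ κ : ι, (‖grad κ v‖^2 + (γ κ / 2) * ‖jmp κ v‖^2)) ≤ A v v := by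
  rw [hA, Finset.mul_sum]
  apply Finset.sum_le_sum
  intro κ _
  -- dk κ is nonnegative
  obtain ⟨heVN, hge, hne, hme⟩ := he κ
  have hdk0 : 0 ≤ dk κ := by
    have h := hd κ (e κ) heVN
    rw [hne, hge] at h
    simp only [norm_zero] at h
    have hs : 0 < Real.sqrt ((m κ (e κ))^2 + (0:ℝ)^2) := by
      apply Real.sqrt_pos.mpr
      have : 0 < (m κ (e κ))^2 := by positivity
      nlinarith
    nlinarith
  -- improved trace inequality: ‖nflx κ v‖ ≤ dk κ * ‖grad κ v‖
  have key : ‖nflx κ v‖ ≤ dk κ * ‖grad κ v‖ := by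
    set c := m κ v / m κ (e κ) with hc
    set w := v - c • e κ with hw
    have hwVN : w ∈ VN := VN.sub_mem hv (VN.smul_mem c heVN)
    have hmw : m κ w = 0 := by
      simp [hw, hc, map_sub, map_smul, smul_eq_mul]
      field_simp
      ring
    have hgw : grad κ w = grad κ v := by simp [hw, map_sub, map_smul, hge]
    have hnw : nflx κ w = nflx κ v := by simp [hw, map_sub, map_smul, hne]
    have h := hd κ w hwVN
    rw [hmw, hgw, hnw] at h
    simpa [Real.sqrt_sq (norm_nonneg _)] using h
  have hcs : |⟪nflx κ v, jmp κ v⟫| ≤ dk κ * ‖grad κ v‖ * ‖jmp κ v‖ := by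
    calc |⟪nflx κ v, jmp κ v⟫| ≤ ‖nflx κ v‖ * ‖jmp κ v‖ := abs_real_inner_le_norm _ _
    _ ≤ dk κ * ‖grad κ v‖ * ‖jmp κ v‖ := by
        apply mul_le_mul_of_nonneg_right key (norm_nonneg _)
  have h1 : ⟪nflx κ v, jmp κ v⟫ ≤ dk κ * ‖grad κ v‖ * ‖jmp κ v‖ := (abs_le.mp hcs).2
  have h2 : -(dk κ * ‖grad κ v‖ * ‖jmp κ v‖) ≤ ⟪nflx κ v, jmp κ v⟫ := (abs_le.mp hcs).1
  have hg2 : ⟪grad κ v, grad κ v⟫ = ‖grad κ v‖^2 := real_inner_self_eq_norm_sq _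
  have hj2 : ⟪jmp κ v, jmp κ v⟫ = ‖jmp κ v‖^2 := real_inner_self_eq_norm_sq _
  rw [hg2, hj2]
  have hγκ := hγ κ
  have ha : (0:ℝ) ≤ ‖grad κ v‖ := norm_nonneg _
  have hb : (0:ℝ) ≤ ‖jmp κ v‖ := norm_nonneg _
  have hmul : 0 ≤ (γ κ - (1/2) * (1+θ)^2 * (dk κ)^2) * ‖jmp κ v‖^2 :=
    mul_nonneg (sub_nonneg.mpr hγκ) (sq_nonneg _)
  rcases le_or_gt 0 (1+θ) with hθ | hθ
  · have hp := mul_le_mul_of_nonneg_left h1 hθ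
    nlinarith [sq_nonneg (‖grad κ v‖ - ((1+θ)/2) * dk κ * ‖jmp κ v‖)]
  · have hp := mul_le_mul_of_nonpos_left h2 (le_of_lt hθ)
    nlinarith [sq_nonneg (‖grad κ v‖ + ((1+θ)/2) * dk κ * ‖jmp κ v‖)]
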